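/- Let N be a finite nonempty player set and for each nonempty S ⊆ N let ν_S be a probability measure on ℝ whose identity function is integrable, with mean μ_S = ∫ z dν_S(z). Suppose there exist d, r : N → ℝ with r_i ≥ 0 for all i, d(N) = μ_N, r(N) = 1, such that for every nonempty S ⊆ N the pushforward of ν_N under the map z ↦ d(S) + r(S)·(z − μ_N) second-order stochastically dominates ν_S. Then the core of the mean game μ (the TU-game with value μ_S on each nonempty S and 0 on ∅) is nonempty; indeed d itself lies in C(μ). -/

import Mathlib

open MeasureTheory ProbabilityTheory
open scoped NNReal ENNReal

/-- `P` second-order stochastically dominates `Q`. -/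
def SSD (P Q : Measure ℝ) : Prop :=
  ∀ u : ℝ, (∫ z in Set.Iic u, (cdf P z - cdf Q z)) ≤ 0

/-- The core of a TU-game `v` on the finite player set `N`. -/
def core {N : Type*} [Fintype N] (v : Finset N → ℝ) : Set (N → ℝ) :=
  {x | (∀ S : Finset N, v S ≤ ∑ i ∈ S, x i) ∧ ∑ i : N, x i = v Finset.univ}

open Filter

/-- If there is an efficient stochastic payoff with transfer payments `(d, r)` whose
coalitional payoffs SSD-dominate the coalitional values, then `d` lies in the core of the
mean game; in particular that core is nonempty. -/

lemma lintegral_cdf_Iic (P : Measure ℝ) [IsProbabilityMeasure P] (u : ℝ) :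
    ∫⁻ z in Set.Iic u, ENNReal.ofReal (cdf P z) = ∫⁻ x, ENNReal.ofReal (u - x) ∂P := by
  have hs : MeasurableSet {p : ℝ × ℝ | p.2 ≤ p.1} := measurableSet_le measurable_snd measurable_fst
  calc ∫⁻ z in Set.Iic u, ENNReal.ofReal (cdf P z)
      = ∫⁻ z in Set.Iic u, ∫⁻ x, {p : ℝ × ℝ | p.2 ≤ p.1}.indicator (fun _ => 1) (z, x) ∂P := by
        refine lintegral_congr fun z => ?_
        rw [ofReal_cdf]
        have : ∀ x : ℝ, {p : ℝ × ℝ | p.2 ≤ p.1}.indicator (fun _ => (1:ℝ≥0∞)) (z, x)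
            = (Set.Iic z).indicator (fun _ => (1:ℝ≥0∞)) x := by
          intro x
          by_cases h : x ≤ z <;> simp [Set.indicator, h]
        simp_rw [this]
        rw [lintegral_indicator measurableSet_Iic]
        simp
    _ = ∫⁻ x, ∫⁻ z in Set.Iic u, {p : ℝ × ℝ | p.2 ≤ p.1}.indicator (fun _ => 1) (z, x) ∂(volume) ∂P := by
        exact lintegral_lintegral_swap ((measurable_one.indicator hs).aemeasurable)
    _ = ∫⁻ x, ENNReal.ofReal (u - x) ∂P := by
        refine lintegral_congr fun x => ?_
        have : ∀ z : ℝ, {p : ℝ × ℝ | p.2 ≤ p.1}.indicator (fun _ => (1:ℝ≥0∞)) (z, x)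
            = (Set.Ici x).indicator (fun _ => (1:ℝ≥0∞)) z := by
          intro z
          by_cases h : x ≤ z <;> simp [Set.indicator, h]
        simp_rw [this]
        rw [lintegral_indicator measurableSet_Ici]
        simp [Measure.restrict_restrict, measurableSet_Ici, Set.Ici_inter_Iic,
          Real.volume_Icc]

lemma cdf_integrableOn_Iic (P : Measure ℝ) [IsProbabilityMeasure P]
    (hP : Integrable (fun z => z) P) (u : ℝ) :
    IntegrableOn (fun z => cdf P z) (Set.Iic u) := by
  refine ⟨((monotone_cdf P).measurable.aestronglyMeasurable), ?_⟩
  rw [hasFiniteIntegral_iff_ofReal (Filter.Eventually.of_forall fun z => cdf_nonneg P z)]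
  rw [lintegral_cdf_Iic]
  calc ∫⁻ x, ENNReal.ofReal (u - x) ∂P ≤ ∫⁻ x, ENNReal.ofReal (|u| + |x|) ∂P := by
        refine lintegral_mono fun x => ENNReal.ofReal_le_ofReal ?_
        have := abs_nonneg x; have := le_abs_self u; have := neg_abs_le x; linarith
    _ < ⊤ := Integrable.lintegral_lt_top ((integrable_const _).add hP.abs)

lemma integral_cdf_Iic (P : Measure ℝ) [IsProbabilityMeasure P]
    (hP : Integrable (fun z => z) P) (u : ℝ) :
    ∫ z in Set.Iic u, cdf P z = ∫ x, max (u - x) 0 ∂P := by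
  have hm : Integrable (fun x => max (u - x) 0) P :=
    (((integrable_const u).sub hP).sup (integrable_const 0))
  have hL : ∫ z in Set.Iic u, cdf P z
      = (∫⁻ z in Set.Iic u, ENNReal.ofReal (cdf P z)).toReal :=
    integral_eq_lintegral_of_nonneg_ae (Filter.Eventually.of_forall fun z => cdf_nonneg P z)
      ((monotone_cdf P).measurable.aestronglyMeasurable)
  have hR : ∫ x, max (u - x) 0 ∂P
      = (∫⁻ x, ENNReal.ofReal (max (u - x) 0) ∂P).toReal :=
    integral_eq_lintegral_of_nonneg_ae (Filter.Eventually.of_forall fun x => le_max_right _ _)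
      hm.aestronglyMeasurable
  rw [hL, hR, lintegral_cdf_Iic]
  congr 1
  refine lintegral_congr fun x => ?_
  rcases le_or_gt x u with h | h
  · rw [max_eq_left (sub_nonneg.mpr h)]
  · rw [max_eq_right (sub_nonpos.mpr h.le), ENNReal.ofReal_of_nonpos (sub_nonpos.mpr h.le),
      ENNReal.ofReal_zero]


lemma ssd_mean_le (P Q : Measure ℝ) [IsProbabilityMeasure P] [IsProbabilityMeasure Q]
    (hP : Integrable (fun z => z) P) (hQ : Integrable (fun z => z) Q)
    (h : SSD P Q) : ∫ z, z ∂Q ≤ ∫ z, z ∂P := by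
  have key : ∀ u : ℝ, ∫ z, z ∂Q - ∫ z, z ∂P ≤ ∫ x, max (x - u) 0 ∂Q := by
    intro u
    have hsubP : Integrable (fun x : ℝ => u - x) P := by
      have := (integrable_const (μ := P) u).sub hP; exact this
    have hsubQ : Integrable (fun x : ℝ => u - x) Q := by
      have := (integrable_const (μ := Q) u).sub hQ; exact this
    have hmP : Integrable (fun x : ℝ => max (u - x) 0) P := by
      have := hsubP.sup (integrable_const (μ := P) 0); exact this
    have hmQ : Integrable (fun x : ℝ => max (x - u) 0) Q := by
      have h' : Integrable (fun x : ℝ => x - u) Q := hQ.sub (integrable_const u)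
      have := h'.sup (integrable_const (μ := Q) 0); exact this
    have hmQ' : Integrable (fun x : ℝ => max (u - x) 0) Q := by
      have := hsubQ.sup (integrable_const (μ := Q) 0); exact this
    have hsubint : ∀ (R : Measure ℝ) [IsProbabilityMeasure R], Integrable (fun z : ℝ => z) R →
        integral R (fun x => u - x) = u - integral R (fun z => z) := by
      intro R _ hR
      rw [integral_sub (integrable_const u) hR, integral_const]; simp
    have h1 := h u
    rw [integral_sub (cdf_integrableOn_Iic P hP u) (cdf_integrableOn_Iic Q hQ u),
      sub_nonpos, integral_cdf_Iic P hP u, integral_cdf_Iic Q hQ u] at h1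
    have h2 : ∫ x, (u - x) ∂P ≤ ∫ x, max (u - x) 0 ∂P :=
      integral_mono hsubP hmP (fun x => le_max_left _ _)
    rw [hsubint P hP] at h2
    have h3 : ∫ x, max (u - x) 0 ∂Q
        = (u - ∫ z, z ∂Q) + ∫ x, max (x - u) 0 ∂Q := by
      have heq : ∀ x : ℝ, max (u - x) 0 = (u - x) + max (x - u) 0 := by
        intro x
        rcases le_or_gt x u with hx | hx
        · rw [max_eq_left (sub_nonneg.mpr hx), max_eq_right (sub_nonpos.mpr hx)]; ring
        · rw [max_eq_right (sub_nonpos.mpr hx.le), max_eq_left (sub_nonneg.mpr hx.le)]; ring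
      calc ∫ x, max (u - x) 0 ∂Q = ∫ x, ((u - x) + max (x - u) 0) ∂Q := by
            exact integral_congr_ae (Filter.Eventually.of_forall heq)
        _ = (∫ x, (u - x) ∂Q) + ∫ x, max (x - u) 0 ∂Q := integral_add hsubQ hmQ
        _ = (u - ∫ z, z ∂Q) + ∫ x, max (x - u) 0 ∂Q := by rw [hsubint Q hQ]
    linarith
  have tend : Tendsto (fun n : ℕ => ∫ x, max (x - n) 0 ∂Q) atTop (nhds 0) := by
    have hT : Tendsto (fun n : ℕ => ∫ x, max (x - n) 0 ∂Q) atTop (nhds (∫ _x, (0:ℝ) ∂Q)) := by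
      refine tendsto_integral_of_dominated_convergence (fun x => |x|) ?_ hQ.abs ?_ ?_
      · exact fun n => ((continuous_id.sub continuous_const).max continuous_const).aestronglyMeasurable
      · intro n
        refine Filter.Eventually.of_forall fun x => ?_
        rw [Real.norm_eq_abs, abs_of_nonneg (le_max_right _ _)]
        rcases le_or_gt x (n : ℝ) with hx | hx
        · rw [max_eq_right (sub_nonpos.mpr hx)]; positivity
        · rw [max_eq_left (sub_nonneg.mpr hx.le)]
          have hn : (0:ℝ) ≤ n := Nat.cast_nonneg n
          show x - (n:ℝ) ≤ |x|
          rw [abs_of_nonneg (by linarith : (0:ℝ) ≤ x)]; linarith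
      · refine Filter.Eventually.of_forall fun x => ?_
        have hev : ∀ᶠ n : ℕ in atTop, max (x - n) 0 = 0 := by
          filter_upwards [Filter.eventually_ge_atTop ⌈x⌉₊] with n hn
          have : x ≤ (n : ℝ) := le_trans (Nat.le_ceil x) (Nat.cast_le.mpr hn)
          rw [max_eq_right (sub_nonpos.mpr this)]
        exact Tendsto.congr' (hev.mono fun n hn => hn.symm) tendsto_const_nhds
    simpa using hT
  have := ge_of_tendsto tend (Filter.Eventually.of_forall fun n => key n)
  linarith

theorem mean_core_nonempty_of_ssd_core {N : Type*} [Fintype N] [DecidableEq N] [Nonempty N]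
    (ν : Finset N → Measure ℝ)
    (hprob : ∀ S : Finset N, S.Nonempty → IsProbabilityMeasure (ν S))
    (hint : ∀ S : Finset N, S.Nonempty → Integrable (fun z => z) (ν S))
    (μ : Finset N → ℝ)
    (hμ : ∀ S : Finset N, S.Nonempty → μ S = ∫ z, z ∂(ν S))
    (hμ0 : μ ∅ = 0)
    (d r : N → ℝ)
    (hr : ∀ i, 0 ≤ r i)
    (hdN : ∑ i : N, d i = μ Finset.univ)
    (hrN : ∑ i : N, r i = 1)
    (hssd : ∀ S : Finset N, S.Nonempty →
      SSD ((ν Finset.univ).map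
          (fun z => (∑ i ∈ S, d i) + (∑ i ∈ S, r i) * (z - μ Finset.univ)))
        (ν S)) :
    d ∈ core μ ∧ (core μ).Nonempty := by
  have huniv : (Finset.univ : Finset N).Nonempty := Finset.univ_nonempty
  haveI hPN : IsProbabilityMeasure (ν Finset.univ) := hprob _ huniv
  have hintN := hint _ huniv
  have hd : ∀ S : Finset N, μ S ≤ ∑ i ∈ S, d i := by
    intro S
    rcases S.eq_empty_or_nonempty with rfl | hS
    · simp [hμ0]
    · set dS := ∑ i ∈ S, d i
      set rS := ∑ i ∈ S, r i
      set f : ℝ → ℝ := fun z => dS + rS * (z - μ Finset.univ) with hf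
      have hfm : Measurable f := by fun_prop
      haveI : IsProbabilityMeasure ((ν Finset.univ).map f) :=
        Measure.isProbabilityMeasure_map hfm.aemeasurable
      haveI : IsProbabilityMeasure (ν S) := hprob S hS
      have hfint : Integrable f (ν Finset.univ) := by
        have : Integrable (fun z : ℝ => rS * (z - μ Finset.univ)) (ν Finset.univ) := by
          have := (hintN.sub (integrable_const (μ Finset.univ))).const_mul rS
          simpa using this
        have := (integrable_const (μ := ν Finset.univ) dS).add this
        simpa [hf] using this
      have hintP : Integrable (fun z : ℝ => z) ((ν Finset.univ).map f) :=
        (integrable_map_measure aestronglyMeasurable_id hfm.aemeasurable).mpr hfint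
      have hmean : ∫ z, z ∂((ν Finset.univ).map f) = dS := by
        have h1 : ∫ z, z ∂((ν Finset.univ).map f) = ∫ z, f z ∂(ν Finset.univ) :=
          integral_map hfm.aemeasurable aestronglyMeasurable_id
        rw [h1]
        simp only [hf]
        rw [integral_add (integrable_const dS) (by
          have := (hintN.sub (integrable_const (μ Finset.univ))).const_mul rS
          simpa using this), integral_const, integral_const_mul,
          integral_sub hintN (integrable_const _), integral_const]
        simp [← hμ _ huniv]
      have hle := ssd_mean_le _ _ hintP (hint S hS) (hssd S hS)
      rw [hmean, ← hμ S hS] at hle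
      exact hle
  have hcore : d ∈ core μ := ⟨hd, hdN⟩
  exact ⟨hcore, ⟨d, hcore⟩⟩
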